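/- Let h ≥ 2 and ℓ ≥ 1, and let J be the monomial ideal generated by {Y_{1,j}Y_{2,i} : 1 ≤ i < j ≤ h} ∪ {Y_{1,i}Y_{1,j}U : 1 ≤ i < j ≤ h} ∪ {Y_{1,i}²U : 1 ≤ i ≤ h}, where Y_{1,1},…,Y_{1,h},Y_{2,1},…,Y_{2,h},U are monomials with pairwise disjoint supports, deg(Y_{1,i}) = deg(Y_{2,i}) = ℓ, deg(U) = s+t+1. Order the generators as: first the Y_{1,j}Y_{2,i} (decreasing j, then decreasing i within equal j, as m₁ = Y_{1,h}Y_{2,h−1},…, m_{h(h−1)/2} = Y_{1,2}Y_{2,1}), then Y_{1,j}Y_{1,i}U similarly, then Y_{1,h}²U,…,Y_{1,1}²U. Then each successive colon ideal (m₁,…,m_{k−1}) : m_k is generated by a regular sequence of monomials of degree ℓ, and for the generators in the second and third blocks the lengths r_k satisfy h−1 ≤ r_k ≤ 2h−2, and for each p with h−1 ≤ p ≤ 2h−2 exactly 2h−p−1 indices k in these blocks have r_k = p. -/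

import Mathlib

open MvPolynomial

/-- `L` is generated by a regular sequence of `r` monomials whose degrees are given by `a`
(a sequence of monomials is regular iff the supports are pairwise disjoint and each is
nonconstant). -/
def IsRegSeqSpan {K : Type} [Field K] {σ : Type} (L : Ideal (MvPolynomial σ K))
    (r : ℕ) (a : Fin r → ℕ) : Prop :=
  ∃ α : Fin r → (σ →₀ ℕ),
    (∀ t, (α t).support.Nonempty) ∧
    (∀ s t, s ≠ t → Disjoint (α s).support (α t).support) ∧
    (∀ t, (monomial (α t) (1 : K)).totalDegree = a t) ∧
    L = Ideal.span (Set.range fun t => monomial (α t) (1 : K))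

namespace Stmt16Aux

variable {K : Type} [Field K] {σ : Type}

lemma deg_support_nonempty {e : σ →₀ ℕ} {ℓ : ℕ} (hl : 1 ≤ ℓ)
    (hd : (monomial e (1 : K)).totalDegree = ℓ) : e.support.Nonempty := by
  rw [totalDegree_monomial _ one_ne_zero] at hd
  by_contra hc
  rw [Finset.not_nonempty_iff_eq_empty, Finsupp.support_eq_empty] at hc
  subst hc
  simp [Finsupp.sum] at hd
  omega

lemma le_fs {a b : σ →₀ ℕ} (h : ∀ x, a x ≤ b x) : a ≤ b := Finsupp.le_def.mpr h

lemma le_of_le_add_disjoint {t s d m : σ →₀ ℕ} (h1 : t ≤ s) (h2 : s ≤ d + m)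
    (h3 : Disjoint t.support m.support) : t ≤ d := by
  rw [Finsupp.le_iff]
  intro x hx
  have hm : m x = 0 := Finsupp.notMem_support_iff.mp (Finset.disjoint_left.mp h3 hx)
  have e1 := Finsupp.le_def.mp h1 x
  have e2 := Finsupp.le_def.mp h2 x
  rw [Finsupp.add_apply, hm] at e2
  omega

lemma disj_add {a b c : σ →₀ ℕ} (h1 : Disjoint a.support b.support)
    (h2 : Disjoint a.support c.support) : Disjoint a.support (b + c).support := by
  classical
  exact (Finset.disjoint_union_right.mpr ⟨h1, h2⟩).mono_right Finsupp.support_add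

lemma mul_monomial_mem_iff {f : MvPolynomial σ K} {m : σ →₀ ℕ} {S : Set (σ →₀ ℕ)} :
    f * monomial m 1 ∈ Ideal.span ((fun e => monomial e (1 : K)) '' S) ↔
      ∀ d ∈ f.support, ∃ s ∈ S, s ≤ d + m := by
  rw [mem_ideal_span_monomial_image]
  constructor
  · intro H d hd
    refine H _ ?_
    rw [mem_support_iff, coeff_mul_monomial, mul_one]
    exact mem_support_iff.mp hd
  · intro H e he
    rw [mem_support_iff, coeff_mul_monomial'] at he
    split_ifs at he with hme
    · rw [mul_one] at he
      obtain ⟨s, hs, hle⟩ := H (e - m) (mem_support_iff.mpr he)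
      exact ⟨s, hs, hle.trans (le_of_eq (tsub_add_cancel_of_le hme))⟩
    · exact absurd rfl he

lemma colon_span_eq {m : σ →₀ ℕ} {S T : Set (σ →₀ ℕ)}
    (H1 : ∀ t ∈ T, ∃ s ∈ S, s ≤ t + m)
    (H2 : ∀ s ∈ S, ∃ t ∈ T, t ≤ s ∧ Disjoint t.support m.support) :
    (Ideal.span ((fun e => monomial e (1 : K)) '' S)).colon
        (Ideal.span {monomial m (1 : K)}) =
      Ideal.span ((fun e => monomial e (1 : K)) '' T) := by
  ext f
  rw [Ideal.mem_colon_span_singleton, mul_monomial_mem_iff, mem_ideal_span_monomial_image]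
  constructor
  · intro H d hd
    obtain ⟨s, hs, hle⟩ := H d hd
    obtain ⟨t, ht, hts, hdisj⟩ := H2 s hs
    exact ⟨t, ht, le_of_le_add_disjoint hts hle hdisj⟩
  · intro H d hd
    obtain ⟨t, ht, hle⟩ := H d hd
    obtain ⟨s, hs, hsle⟩ := H1 t ht
    exact ⟨s, hs, hsle.trans (add_le_add_left hle m)⟩

end Stmt16Aux

/-- Regular quotients for the generators of the initial ideal of `I_{B_{ℓ,h}^{s,t}}`,
ordered as: first the `Y_{1,j}Y_{2,i}` (`i<j`, ordered decreasingly in `i` then in `j`),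
then the `Y_{1,j}Y_{1,i}U` similarly, then `Y_{1,h}²U,…,Y_{1,1}²U`.  Every successive colon
ideal is generated by a regular sequence of monomials of degree `ℓ`; the lengths `r_k` for
generators in the second and third blocks satisfy `h−1 ≤ r_k ≤ 2h−2`, and for every `p`
with `h−1 ≤ p ≤ 2h−2` exactly `2h−p−1` of them have `r_k = p`. -/
theorem stmt_16 {K : Type} [Field K] {σ : Type} (h ℓ s t : ℕ)
    (hh : 2 ≤ h) (hℓ : 1 ≤ ℓ) (hs : 1 ≤ s) (ht : 1 ≤ t)
    (y1 y2 : ℕ → (σ →₀ ℕ)) (u : σ →₀ ℕ)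
    (hdeg1 : ∀ i, 1 ≤ i → i ≤ h → (monomial (y1 i) (1 : K)).totalDegree = ℓ)
    (hdeg2 : ∀ i, 1 ≤ i → i ≤ h → (monomial (y2 i) (1 : K)).totalDegree = ℓ)
    (hdegu : (monomial u (1 : K)).totalDegree = s + t + 1)
    (hdisj11 : ∀ i j, 1 ≤ i → i ≤ h → 1 ≤ j → j ≤ h → i ≠ j →
      Disjoint (y1 i).support (y1 j).support)
    (hdisj22 : ∀ i j, 1 ≤ i → i ≤ h → 1 ≤ j → j ≤ h → i ≠ j →
      Disjoint (y2 i).support (y2 j).support)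
    (hdisj12 : ∀ i j, 1 ≤ i → i ≤ h → 1 ≤ j → j ≤ h →
      Disjoint (y1 i).support (y2 j).support)
    (hdisj1u : ∀ i, 1 ≤ i → i ≤ h → Disjoint (y1 i).support u.support)
    (hdisj2u : ∀ i, 1 ≤ i → i ≤ h → Disjoint (y2 i).support u.support)
    (Y1 Y2 : ℕ → MvPolynomial σ K) (U : MvPolynomial σ K)
    (hY1 : ∀ i, Y1 i = monomial (y1 i) 1) (hY2 : ∀ i, Y2 i = monomial (y2 i) 1)
    (hU : U = monomial u 1) :
    ∃ (r1 r2 : ℕ → ℕ → ℕ) (r3 : ℕ → ℕ),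
      -- colon ideals within the first block
      (∀ i j, 1 ≤ i → i < j → j ≤ h → ¬(i = h - 1 ∧ j = h) →
        IsRegSeqSpan
          ((Ideal.span {x | ∃ p q, 1 ≤ p ∧ p < q ∧ q ≤ h ∧ (i < p ∨ (p = i ∧ j < q)) ∧
              x = Y1 q * Y2 p}).colon (Ideal.span {Y1 j * Y2 i}))
          (r1 i j) (fun _ => ℓ)) ∧
      -- colon ideals at generators of the second block
      (∀ i j, 1 ≤ i → i < j → j ≤ h →
        IsRegSeqSpan
          ((Ideal.span
              ({x | ∃ p q, 1 ≤ p ∧ p < q ∧ q ≤ h ∧ x = Y1 q * Y2 p} ∪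
               {x | ∃ p q, 1 ≤ p ∧ p < q ∧ q ≤ h ∧ (i < p ∨ (p = i ∧ j < q)) ∧
                  x = Y1 q * Y1 p * U})).colon (Ideal.span {Y1 j * Y1 i * U}))
          (r2 i j) (fun _ => ℓ)) ∧
      -- colon ideals at generators of the third block
      (∀ i, 1 ≤ i → i ≤ h →
        IsRegSeqSpan
          ((Ideal.span
              ({x | ∃ p q, 1 ≤ p ∧ p < q ∧ q ≤ h ∧ x = Y1 q * Y2 p} ∪
               {x | ∃ p q, 1 ≤ p ∧ p < q ∧ q ≤ h ∧ x = Y1 q * Y1 p * U} ∪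
               {x | ∃ p, i < p ∧ p ≤ h ∧ x = Y1 p * Y1 p * U})).colon
            (Ideal.span {Y1 i * Y1 i * U}))
          (r3 i) (fun _ => ℓ)) ∧
      -- bounds for the lengths in the second and third blocks
      (∀ i j, 1 ≤ i → i < j → j ≤ h → h - 1 ≤ r2 i j ∧ r2 i j ≤ 2 * h - 2) ∧
      (∀ i, 1 ≤ i → i ≤ h → h - 1 ≤ r3 i ∧ r3 i ≤ 2 * h - 2) ∧
      -- counting statement
      (∀ p, h - 1 ≤ p → p ≤ 2 * h - 2 →
        ((Finset.Icc 1 h ×ˢ Finset.Icc 1 h).filter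
            (fun q => q.1 < q.2 ∧ r2 q.1 q.2 = p)).card
          + ((Finset.Icc 1 h).filter (fun i => r3 i = p)).card
        = 2 * h - p - 1) := by
    classical
  have hm12 : ∀ q p, Y1 q * Y2 p = monomial (y1 q + y2 p) (1 : K) := by
    intro q p; rw [hY1, hY2, monomial_mul, one_mul]
  have hm11u : ∀ q p, Y1 q * Y1 p * U = monomial (y1 q + y1 p + u) (1 : K) := by
    intro q p; rw [hY1 q, hY1 p, hU, monomial_mul, monomial_mul, one_mul, one_mul]
  refine ⟨fun i _ => h - 1 - i, fun i j => h + j - i - 2, fun i => h + i - 2,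
    ?_, ?_, ?_, ?_, ?_, ?_⟩
  -- ───────────────────────── Block 1 ─────────────────────────
  · intro i j hi hij hj hne
    beta_reduce
    have hi2 : i + 2 ≤ h := by omega
    set α : Fin (h - 1 - i) → (σ →₀ ℕ) :=
      fun k => if i + 1 + (k : ℕ) < j then y2 (i + 1 + (k : ℕ)) else y1 (i + 2 + (k : ℕ))
      with hα
    have hy2v : ∀ a, i < a → a < j → ∃ k : Fin (h - 1 - i), α k = y2 a := by
      intro a ha1 ha2
      refine ⟨⟨a - i - 1, by omega⟩, ?_⟩
      simp only [hα]
      rw [if_pos (by omega)]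
      congr 1
      omega
    have hy1v : ∀ a, j < a → a ≤ h → ∃ k : Fin (h - 1 - i), α k = y1 a := by
      intro a ha1 ha2
      refine ⟨⟨a - i - 2, by omega⟩, ?_⟩
      simp only [hα]
      rw [if_neg (by omega)]
      congr 1
      omega
    refine ⟨α, ?_, ?_, ?_, ?_⟩
    · intro k
      have hk := k.isLt
      simp only [hα]
      split_ifs with h1
      · exact Stmt16Aux.deg_support_nonempty hℓ (hdeg2 _ (by omega) (by omega))
      · exact Stmt16Aux.deg_support_nonempty hℓ (hdeg1 _ (by omega) (by omega))
    · intro a b hab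
      have ha := a.isLt; have hb := b.isLt
      have hab' : (a : ℕ) ≠ (b : ℕ) := fun hv => hab (Fin.ext hv)
      simp only [hα]
      split_ifs with h1 h2 h2
      all_goals first
        | exact hdisj22 _ _ (by omega) (by omega) (by omega) (by omega) (by omega)
        | exact hdisj11 _ _ (by omega) (by omega) (by omega) (by omega) (by omega)
        | exact hdisj12 _ _ (by omega) (by omega) (by omega) (by omega)
        | exact (hdisj12 _ _ (by omega) (by omega) (by omega) (by omega)).symm
    · intro k
      have hk := k.isLt
      simp only [hα]
      split_ifs with h1
      · exact hdeg2 _ (by omega) (by omega)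
      · exact hdeg1 _ (by omega) (by omega)
    · have hset : {x | ∃ p q, 1 ≤ p ∧ p < q ∧ q ≤ h ∧ (i < p ∨ (p = i ∧ j < q)) ∧
          x = Y1 q * Y2 p}
          = (fun e => monomial e (1 : K)) ''
            {e | ∃ p q, 1 ≤ p ∧ p < q ∧ q ≤ h ∧ (i < p ∨ (p = i ∧ j < q)) ∧
              e = y1 q + y2 p} := by
        ext x
        constructor
        · rintro ⟨p, q, h1, h2, h3, h4, rfl⟩
          exact ⟨y1 q + y2 p, ⟨p, q, h1, h2, h3, h4, rfl⟩, (hm12 q p).symm⟩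
        · rintro ⟨e, ⟨p, q, h1, h2, h3, h4, rfl⟩, rfl⟩
          exact ⟨p, q, h1, h2, h3, h4, (hm12 q p).symm⟩
      rw [hset, hm12 j i,
        show (Set.range fun k => monomial (α k) (1 : K))
            = (fun e => monomial e (1 : K)) '' Set.range α
          from Set.range_comp (fun e => monomial e (1 : K)) α]
      refine Stmt16Aux.colon_span_eq ?_ ?_
      · rintro w ⟨k, rfl⟩
        have hk := k.isLt
        simp only [hα]
        split_ifs with h1
        · exact ⟨y1 j + y2 (i + 1 + (k : ℕ)),
            ⟨i + 1 + (k : ℕ), j, by omega, h1, hj, Or.inl (by omega), rfl⟩,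
            Stmt16Aux.le_fs fun x => by simp only [Finsupp.add_apply]; omega⟩
        · exact ⟨y1 (i + 2 + (k : ℕ)) + y2 i,
            ⟨i, i + 2 + (k : ℕ), hi, by omega, by omega, Or.inr ⟨rfl, by omega⟩, rfl⟩,
            Stmt16Aux.le_fs fun x => by simp only [Finsupp.add_apply]; omega⟩
      · rintro w ⟨p, q, h1, h2, h3, h4, rfl⟩
        rcases h4 with h4 | ⟨rfl, h4⟩
        · by_cases hpj : p < j
          · obtain ⟨k, hk⟩ := hy2v p h4 hpj
            refine ⟨α k, ⟨k, rfl⟩, ?_, ?_⟩ <;> rw [hk]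
            · exact Stmt16Aux.le_fs fun x => by simp only [Finsupp.add_apply]; omega
            · exact Stmt16Aux.disj_add
                ((hdisj12 _ _ (by omega) (by omega) (by omega) (by omega)).symm)
                (hdisj22 _ _ (by omega) (by omega) (by omega) (by omega) (by omega))
          · obtain ⟨k, hk⟩ := hy1v q (by omega) h3
            refine ⟨α k, ⟨k, rfl⟩, ?_, ?_⟩ <;> rw [hk]
            · exact Stmt16Aux.le_fs fun x => by simp only [Finsupp.add_apply]; omega
            · exact Stmt16Aux.disj_add
                (hdisj11 _ _ (by omega) (by omega) (by omega) (by omega) (by omega))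
                (hdisj12 _ _ (by omega) (by omega) (by omega) (by omega))
        · obtain ⟨k, hk⟩ := hy1v q h4 h3
          refine ⟨α k, ⟨k, rfl⟩, ?_, ?_⟩ <;> rw [hk]
          · exact Stmt16Aux.le_fs fun x => by simp only [Finsupp.add_apply]; omega
          · exact Stmt16Aux.disj_add
              (hdisj11 _ _ (by omega) (by omega) (by omega) (by omega) (by omega))
              (hdisj12 _ _ (by omega) (by omega) (by omega) (by omega))
  -- ───────────────────────── Block 2 ─────────────────────────
  · intro i j hi hij hj
    beta_reduce
    set α : Fin (h + j - i - 2) → (σ →₀ ℕ) :=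
      fun k => if (k : ℕ) < j - 1 then y2 ((k : ℕ) + 1)
        else if i + 2 + (k : ℕ) - j < j then y1 (i + 2 + (k : ℕ) - j)
        else y1 (i + 3 + (k : ℕ) - j)
      with hα
    have hy2v : ∀ a, 1 ≤ a → a < j → ∃ k : Fin (h + j - i - 2), α k = y2 a := by
      intro a ha1 ha2
      refine ⟨⟨a - 1, by omega⟩, ?_⟩
      simp only [hα]
      rw [if_pos (by omega)]
      congr 1
      omega
    have hy1v : ∀ a, i < a → a ≤ h → a ≠ j → ∃ k : Fin (h + j - i - 2), α k = y1 a := by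
      intro a ha1 ha2 ha3
      by_cases haj : a < j
      · refine ⟨⟨a + j - i - 2, by omega⟩, ?_⟩
        simp only [hα]
        rw [if_neg (by omega), if_pos (by omega)]
        congr 1
        omega
      · refine ⟨⟨a + j - i - 3, by omega⟩, ?_⟩
        simp only [hα]
        rw [if_neg (by omega), if_neg (by omega)]
        congr 1
        omega
    refine ⟨α, ?_, ?_, ?_, ?_⟩
    · intro k
      have hk := k.isLt
      simp only [hα]
      split_ifs with h1 h2
      · exact Stmt16Aux.deg_support_nonempty hℓ (hdeg2 _ (by omega) (by omega))
      · exact Stmt16Aux.deg_support_nonempty hℓ (hdeg1 _ (by omega) (by omega))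
      · exact Stmt16Aux.deg_support_nonempty hℓ (hdeg1 _ (by omega) (by omega))
    · intro a b hab
      have ha := a.isLt; have hb := b.isLt
      have hab' : (a : ℕ) ≠ (b : ℕ) := fun hv => hab (Fin.ext hv)
      simp only [hα]
      split_ifs
      all_goals first
        | exact hdisj22 _ _ (by omega) (by omega) (by omega) (by omega) (by omega)
        | exact hdisj11 _ _ (by omega) (by omega) (by omega) (by omega) (by omega)
        | exact hdisj12 _ _ (by omega) (by omega) (by omega) (by omega)
        | exact (hdisj12 _ _ (by omega) (by omega) (by omega) (by omega)).symm
    · intro k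
      have hk := k.isLt
      simp only [hα]
      split_ifs with h1 h2
      · exact hdeg2 _ (by omega) (by omega)
      · exact hdeg1 _ (by omega) (by omega)
      · exact hdeg1 _ (by omega) (by omega)
    · have hset : ({x | ∃ p q, 1 ≤ p ∧ p < q ∧ q ≤ h ∧ x = Y1 q * Y2 p} ∪
          {x | ∃ p q, 1 ≤ p ∧ p < q ∧ q ≤ h ∧ (i < p ∨ (p = i ∧ j < q)) ∧
            x = Y1 q * Y1 p * U})
          = (fun e => monomial e (1 : K)) ''
            ({e | ∃ p q, 1 ≤ p ∧ p < q ∧ q ≤ h ∧ e = y1 q + y2 p} ∪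
             {e | ∃ p q, 1 ≤ p ∧ p < q ∧ q ≤ h ∧ (i < p ∨ (p = i ∧ j < q)) ∧
               e = y1 q + y1 p + u}) := by
        rw [Set.image_union]
        ext x
        constructor
        · rintro (⟨p, q, h1, h2, h3, rfl⟩ | ⟨p, q, h1, h2, h3, h4, rfl⟩)
          · exact Or.inl ⟨y1 q + y2 p, ⟨p, q, h1, h2, h3, rfl⟩, (hm12 q p).symm⟩
          · exact Or.inr ⟨y1 q + y1 p + u, ⟨p, q, h1, h2, h3, h4, rfl⟩, (hm11u q p).symm⟩
        · rintro (⟨e, ⟨p, q, h1, h2, h3, rfl⟩, rfl⟩ | ⟨e, ⟨p, q, h1, h2, h3, h4, rfl⟩, rfl⟩)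
          · exact Or.inl ⟨p, q, h1, h2, h3, (hm12 q p).symm⟩
          · exact Or.inr ⟨p, q, h1, h2, h3, h4, (hm11u q p).symm⟩
      rw [hset, hm11u j i,
        show (Set.range fun k => monomial (α k) (1 : K))
            = (fun e => monomial e (1 : K)) '' Set.range α
          from Set.range_comp (fun e => monomial e (1 : K)) α]
      refine Stmt16Aux.colon_span_eq ?_ ?_
      · rintro w ⟨k, rfl⟩
        have hk := k.isLt
        simp only [hα]
        split_ifs with h1 h2
        · exact ⟨y1 j + y2 ((k : ℕ) + 1),
            Or.inl ⟨(k : ℕ) + 1, j, by omega, by omega, hj, rfl⟩,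
            Stmt16Aux.le_fs fun x => by simp only [Finsupp.add_apply]; omega⟩
        · exact ⟨y1 j + y1 (i + 2 + (k : ℕ) - j) + u,
            Or.inr ⟨i + 2 + (k : ℕ) - j, j, by omega, h2, hj, Or.inl (by omega), rfl⟩,
            Stmt16Aux.le_fs fun x => by simp only [Finsupp.add_apply]; omega⟩
        · exact ⟨y1 (i + 3 + (k : ℕ) - j) + y1 i + u,
            Or.inr ⟨i, i + 3 + (k : ℕ) - j, hi, by omega, by omega,
              Or.inr ⟨rfl, by omega⟩, rfl⟩,
            Stmt16Aux.le_fs fun x => by simp only [Finsupp.add_apply]; omega⟩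
      · rintro w (⟨p, q, h1, h2, h3, rfl⟩ | ⟨p, q, h1, h2, h3, h4, rfl⟩)
        · by_cases hpj : p < j
          · obtain ⟨k, hk⟩ := hy2v p h1 hpj
            refine ⟨α k, ⟨k, rfl⟩, ?_, ?_⟩ <;> rw [hk]
            · exact Stmt16Aux.le_fs fun x => by simp only [Finsupp.add_apply]; omega
            · exact Stmt16Aux.disj_add (Stmt16Aux.disj_add
                ((hdisj12 _ _ (by omega) (by omega) (by omega) (by omega)).symm)
                ((hdisj12 _ _ (by omega) (by omega) (by omega) (by omega)).symm))
                (hdisj2u _ (by omega) (by omega))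
          · obtain ⟨k, hk⟩ := hy1v q (by omega) h3 (by omega)
            refine ⟨α k, ⟨k, rfl⟩, ?_, ?_⟩ <;> rw [hk]
            · exact Stmt16Aux.le_fs fun x => by simp only [Finsupp.add_apply]; omega
            · exact Stmt16Aux.disj_add (Stmt16Aux.disj_add
                (hdisj11 _ _ (by omega) (by omega) (by omega) (by omega) (by omega))
                (hdisj11 _ _ (by omega) (by omega) (by omega) (by omega) (by omega)))
                (hdisj1u _ (by omega) (by omega))
        · rcases h4 with h4 | ⟨rfl, h4⟩
          · by_cases hpj : p = j
            · subst hpj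
              obtain ⟨k, hk⟩ := hy1v q (by omega) h3 (by omega)
              refine ⟨α k, ⟨k, rfl⟩, ?_, ?_⟩ <;> rw [hk]
              · exact Stmt16Aux.le_fs fun x => by simp only [Finsupp.add_apply]; omega
              · exact Stmt16Aux.disj_add (Stmt16Aux.disj_add
                  (hdisj11 _ _ (by omega) (by omega) (by omega) (by omega) (by omega))
                  (hdisj11 _ _ (by omega) (by omega) (by omega) (by omega) (by omega)))
                  (hdisj1u _ (by omega) (by omega))
            · obtain ⟨k, hk⟩ := hy1v p h4 (by omega) hpj
              refine ⟨α k, ⟨k, rfl⟩, ?_, ?_⟩ <;> rw [hk]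
              · exact Stmt16Aux.le_fs fun x => by simp only [Finsupp.add_apply]; omega
              · exact Stmt16Aux.disj_add (Stmt16Aux.disj_add
                  (hdisj11 _ _ (by omega) (by omega) (by omega) (by omega) (by omega))
                  (hdisj11 _ _ (by omega) (by omega) (by omega) (by omega) (by omega)))
                  (hdisj1u _ (by omega) (by omega))
          · obtain ⟨k, hk⟩ := hy1v q (by omega) h3 (by omega)
            refine ⟨α k, ⟨k, rfl⟩, ?_, ?_⟩ <;> rw [hk]
            · exact Stmt16Aux.le_fs fun x => by simp only [Finsupp.add_apply]; omega
            · exact Stmt16Aux.disj_add (Stmt16Aux.disj_add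
                (hdisj11 _ _ (by omega) (by omega) (by omega) (by omega) (by omega))
                (hdisj11 _ _ (by omega) (by omega) (by omega) (by omega) (by omega)))
                (hdisj1u _ (by omega) (by omega))
  -- ───────────────────────── Block 3 ─────────────────────────
  · intro i hi hih
    beta_reduce
    set α : Fin (h + i - 2) → (σ →₀ ℕ) :=
      fun k => if (k : ℕ) < i - 1 then y2 ((k : ℕ) + 1)
        else if (k : ℕ) + 2 - i < i then y1 ((k : ℕ) + 2 - i)
        else y1 ((k : ℕ) + 3 - i)
      with hα
    have hy2v : ∀ a, 1 ≤ a → a < i → ∃ k : Fin (h + i - 2), α k = y2 a := by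
      intro a ha1 ha2
      refine ⟨⟨a - 1, by omega⟩, ?_⟩
      simp only [hα]
      rw [if_pos (by omega)]
      congr 1
      omega
    have hy1v : ∀ a, 1 ≤ a → a ≤ h → a ≠ i → ∃ k : Fin (h + i - 2), α k = y1 a := by
      intro a ha1 ha2 ha3
      by_cases hai : a < i
      · refine ⟨⟨a + i - 2, by omega⟩, ?_⟩
        simp only [hα]
        rw [if_neg (by omega), if_pos (by omega)]
        congr 1
        omega
      · refine ⟨⟨a + i - 3, by omega⟩, ?_⟩
        simp only [hα]
        rw [if_neg (by omega), if_neg (by omega)]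
        congr 1
        omega
    refine ⟨α, ?_, ?_, ?_, ?_⟩
    · intro k
      have hk := k.isLt
      simp only [hα]
      split_ifs with h1 h2
      · exact Stmt16Aux.deg_support_nonempty hℓ (hdeg2 _ (by omega) (by omega))
      · exact Stmt16Aux.deg_support_nonempty hℓ (hdeg1 _ (by omega) (by omega))
      · exact Stmt16Aux.deg_support_nonempty hℓ (hdeg1 _ (by omega) (by omega))
    · intro a b hab
      have ha := a.isLt; have hb := b.isLt
      have hab' : (a : ℕ) ≠ (b : ℕ) := fun hv => hab (Fin.ext hv)
      simp only [hα]
      split_ifs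
      all_goals first
        | exact hdisj22 _ _ (by omega) (by omega) (by omega) (by omega) (by omega)
        | exact hdisj11 _ _ (by omega) (by omega) (by omega) (by omega) (by omega)
        | exact hdisj12 _ _ (by omega) (by omega) (by omega) (by omega)
        | exact (hdisj12 _ _ (by omega) (by omega) (by omega) (by omega)).symm
    · intro k
      have hk := k.isLt
      simp only [hα]
      split_ifs with h1 h2
      · exact hdeg2 _ (by omega) (by omega)
      · exact hdeg1 _ (by omega) (by omega)
      · exact hdeg1 _ (by omega) (by omega)
    · have hset : ({x | ∃ p q, 1 ≤ p ∧ p < q ∧ q ≤ h ∧ x = Y1 q * Y2 p} ∪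
          {x | ∃ p q, 1 ≤ p ∧ p < q ∧ q ≤ h ∧ x = Y1 q * Y1 p * U} ∪
          {x | ∃ p, i < p ∧ p ≤ h ∧ x = Y1 p * Y1 p * U})
          = (fun e => monomial e (1 : K)) ''
            ({e | ∃ p q, 1 ≤ p ∧ p < q ∧ q ≤ h ∧ e = y1 q + y2 p} ∪
             {e | ∃ p q, 1 ≤ p ∧ p < q ∧ q ≤ h ∧ e = y1 q + y1 p + u} ∪
             {e | ∃ p, i < p ∧ p ≤ h ∧ e = y1 p + y1 p + u}) := by
        rw [Set.image_union, Set.image_union]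
        ext x
        constructor
        · rintro ((⟨p, q, h1, h2, h3, rfl⟩ | ⟨p, q, h1, h2, h3, rfl⟩) | ⟨p, h1, h2, rfl⟩)
          · exact Or.inl (Or.inl ⟨y1 q + y2 p, ⟨p, q, h1, h2, h3, rfl⟩, (hm12 q p).symm⟩)
          · exact Or.inl (Or.inr ⟨y1 q + y1 p + u, ⟨p, q, h1, h2, h3, rfl⟩,
              (hm11u q p).symm⟩)
          · exact Or.inr ⟨y1 p + y1 p + u, ⟨p, h1, h2, rfl⟩, (hm11u p p).symm⟩
        · rintro ((⟨e, ⟨p, q, h1, h2, h3, rfl⟩, rfl⟩ | ⟨e, ⟨p, q, h1, h2, h3, rfl⟩, rfl⟩) |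
            ⟨e, ⟨p, h1, h2, rfl⟩, rfl⟩)
          · exact Or.inl (Or.inl ⟨p, q, h1, h2, h3, (hm12 q p).symm⟩)
          · exact Or.inl (Or.inr ⟨p, q, h1, h2, h3, (hm11u q p).symm⟩)
          · exact Or.inr ⟨p, h1, h2, (hm11u p p).symm⟩
      rw [hset, hm11u i i,
        show (Set.range fun k => monomial (α k) (1 : K))
            = (fun e => monomial e (1 : K)) '' Set.range α
          from Set.range_comp (fun e => monomial e (1 : K)) α]
      refine Stmt16Aux.colon_span_eq ?_ ?_
      · rintro w ⟨k, rfl⟩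
        have hk := k.isLt
        simp only [hα]
        split_ifs with h1 h2
        · exact ⟨y1 i + y2 ((k : ℕ) + 1),
            Or.inl (Or.inl ⟨(k : ℕ) + 1, i, by omega, by omega, hih, rfl⟩),
            Stmt16Aux.le_fs fun x => by simp only [Finsupp.add_apply]; omega⟩
        · exact ⟨y1 i + y1 ((k : ℕ) + 2 - i) + u,
            Or.inl (Or.inr ⟨(k : ℕ) + 2 - i, i, by omega, h2, hih, rfl⟩),
            Stmt16Aux.le_fs fun x => by simp only [Finsupp.add_apply]; omega⟩
        · exact ⟨y1 ((k : ℕ) + 3 - i) + y1 i + u,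
            Or.inl (Or.inr ⟨i, (k : ℕ) + 3 - i, hi, by omega, by omega, rfl⟩),
            Stmt16Aux.le_fs fun x => by simp only [Finsupp.add_apply]; omega⟩
      · rintro w ((⟨p, q, h1, h2, h3, rfl⟩ | ⟨p, q, h1, h2, h3, rfl⟩) | ⟨p, h1, h2, rfl⟩)
        · by_cases hqi : q = i
          · subst hqi
            obtain ⟨k, hk⟩ := hy2v p h1 h2
            refine ⟨α k, ⟨k, rfl⟩, ?_, ?_⟩ <;> rw [hk]
            · exact Stmt16Aux.le_fs fun x => by simp only [Finsupp.add_apply]; omega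
            · exact Stmt16Aux.disj_add (Stmt16Aux.disj_add
                ((hdisj12 _ _ (by omega) (by omega) (by omega) (by omega)).symm)
                ((hdisj12 _ _ (by omega) (by omega) (by omega) (by omega)).symm))
                (hdisj2u _ (by omega) (by omega))
          · obtain ⟨k, hk⟩ := hy1v q (by omega) h3 hqi
            refine ⟨α k, ⟨k, rfl⟩, ?_, ?_⟩ <;> rw [hk]
            · exact Stmt16Aux.le_fs fun x => by simp only [Finsupp.add_apply]; omega
            · exact Stmt16Aux.disj_add (Stmt16Aux.disj_add
                (hdisj11 _ _ (by omega) (by omega) (by omega) (by omega) (by omega))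
                (hdisj11 _ _ (by omega) (by omega) (by omega) (by omega) (by omega)))
                (hdisj1u _ (by omega) (by omega))
        · by_cases hpi : p = i
          · subst hpi
            obtain ⟨k, hk⟩ := hy1v q (by omega) h3 (by omega)
            refine ⟨α k, ⟨k, rfl⟩, ?_, ?_⟩ <;> rw [hk]
            · exact Stmt16Aux.le_fs fun x => by simp only [Finsupp.add_apply]; omega
            · exact Stmt16Aux.disj_add (Stmt16Aux.disj_add
                (hdisj11 _ _ (by omega) (by omega) (by omega) (by omega) (by omega))
                (hdisj11 _ _ (by omega) (by omega) (by omega) (by omega) (by omega)))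
                (hdisj1u _ (by omega) (by omega))
          · obtain ⟨k, hk⟩ := hy1v p h1 (by omega) hpi
            refine ⟨α k, ⟨k, rfl⟩, ?_, ?_⟩ <;> rw [hk]
            · exact Stmt16Aux.le_fs fun x => by simp only [Finsupp.add_apply]; omega
            · exact Stmt16Aux.disj_add (Stmt16Aux.disj_add
                (hdisj11 _ _ (by omega) (by omega) (by omega) (by omega) (by omega))
                (hdisj11 _ _ (by omega) (by omega) (by omega) (by omega) (by omega)))
                (hdisj1u _ (by omega) (by omega))
        · obtain ⟨k, hk⟩ := hy1v p (by omega) h2 (by omega)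
          refine ⟨α k, ⟨k, rfl⟩, ?_, ?_⟩ <;> rw [hk]
          · exact Stmt16Aux.le_fs fun x => by simp only [Finsupp.add_apply]; omega
          · exact Stmt16Aux.disj_add (Stmt16Aux.disj_add
              (hdisj11 _ _ (by omega) (by omega) (by omega) (by omega) (by omega))
              (hdisj11 _ _ (by omega) (by omega) (by omega) (by omega) (by omega)))
              (hdisj1u _ (by omega) (by omega))
  -- ───────────────────────── bounds and counting ─────────────────────────
  · intro i j hi hij hj
    show h - 1 ≤ h + j - i - 2 ∧ h + j - i - 2 ≤ 2 * h - 2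
    omega
  · intro i hi hih
    show h - 1 ≤ h + i - 2 ∧ h + i - 2 ≤ 2 * h - 2
    omega
  · intro p hp1 hp2
    show ((Finset.Icc 1 h ×ˢ Finset.Icc 1 h).filter
          (fun q => q.1 < q.2 ∧ h + q.2 - q.1 - 2 = p)).card
        + ((Finset.Icc 1 h).filter (fun i => h + i - 2 = p)).card = 2 * h - p - 1
    have hc1 : ((Finset.Icc 1 h ×ˢ Finset.Icc 1 h).filter
          (fun q => q.1 < q.2 ∧ h + q.2 - q.1 - 2 = p))
        = (Finset.Icc 1 (h - (p + 2 - h))).image (fun a => (a, a + (p + 2 - h))) := by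
      ext ⟨a, b⟩
      simp only [Finset.mem_filter, Finset.mem_product, Finset.mem_image, Finset.mem_Icc,
        Prod.mk.injEq]
      constructor
      · rintro ⟨⟨⟨ha1, ha2⟩, hb1, hb2⟩, hab, hpe⟩
        exact ⟨a, ⟨ha1, by omega⟩, rfl, by omega⟩
      · rintro ⟨c, ⟨hc1, hc2⟩, rfl, rfl⟩
        exact ⟨⟨⟨hc1, by omega⟩, by omega, by omega⟩, by omega, by omega⟩
    have hc2 : ((Finset.Icc 1 h).filter (fun i => h + i - 2 = p)) = {p + 2 - h} := by
      ext a
      simp only [Finset.mem_filter, Finset.mem_Icc, Finset.mem_singleton]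
      omega
    rw [hc1, hc2, Finset.card_image_of_injective _
        (fun a b hab => by simpa using (Prod.ext_iff.mp hab).1),
      Finset.card_singleton, Nat.card_Icc]
    omega
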